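/- Let T be a string of length n, and define SA_pal, L_pal and LF_pal as below. For all positions 1 ≤ i < j ≤ n+1, if L_pal[i] = L_pal[j] and neither equals the special symbol $, then LF_pal(i) < LF_pal(j). -/

import Mathlib

open scoped ENat

variable {α : Type*}

/-- `w` is a palindrome. -/
def IsPal (w : List α) : Prop := w.reverse = w

/-- The substring `w[i..j]`, 1-indexed, inclusive; empty if `i > j`. -/
def sub (w : List α) (i j : ℕ) : List α := (w.take j).drop (i - 1)

/-- Two strings of the same length pal-match: they agree on which substrings
`w[i..j]` (for `1 ≤ i < j ≤ |w|`) are palindromes. -/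
def PalMatch (x y : List α) : Prop :=
  x.length = y.length ∧
    ∀ i j, 1 ≤ i → i < j → j ≤ x.length → (IsPal (sub x i j) ↔ IsPal (sub y i j))

/-- `sspAt w i` : length of the shortest palindromic suffix of `w[1..i]`
of length at least 2, or `∞` if none exists. -/
noncomputable def sspAt (w : List α) (i : ℕ) : ℕ∞ :=
  sInf {ℓ : ℕ∞ | ∃ u : List α, u <:+ w.take i ∧ IsPal u ∧ 2 ≤ u.length ∧ (u.length : ℕ∞) = ℓ}

/-- The ssp-encoding of `w` as a sequence of length `|w|` over `ℕ ∪ {∞}`. -/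
noncomputable def ssp (w : List α) : List ℕ∞ :=
  (List.range w.length).map fun k => sspAt w (k + 1)

/-- The palindromic proper suffixes of `w` (including the empty suffix). -/
def palSufs (w : List α) : Set (List α) :=
  {u | u <:+ w ∧ IsPal u ∧ u.length < w.length}

/-- The suffix-pal-groups of `w`, identified with the character `w[|w|-|u|]`
immediately to the left of their members. -/
def palSufGroups (w : List α) : Set (Option α) :=
  {c | ∃ u ∈ palSufs w, w[w.length - u.length - 1]? = c}

/-- Length of the representative (shortest member) of the suffix-pal-group of `w`
whose members have the character `c` immediately to their left. -/
noncomputable def repLen (w : List α) (c : Option α) : ℕ :=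
  sInf {ℓ : ℕ | ∃ u ∈ palSufs w, w[w.length - u.length - 1]? = c ∧ u.length = ℓ}

/-- The 1-based identifier of the suffix-pal-group of `w` with left character `c`:
identifiers are assigned in increasing order of the representatives' lengths. -/
noncomputable def groupIdOf (w : List α) (c : Option α) : ℕ :=
  Set.ncard {c' | c' ∈ palSufGroups w ∧ repLen w c' ≤ repLen w c}

/-- `sspgAt w i` : `∞` if `sspAt w i = ∞`, and otherwise the identifier of the
suffix-pal-group of `w[1..i-1]` containing the palindromic suffix of `w[1..i-1]`
of length `sspAt w i - 2`. -/
noncomputable def sspgAt (w : List α) (i : ℕ) : ℕ∞ :=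
  if sspAt w i = ⊤ then ⊤
  else (groupIdOf (w.take (i - 1))
        ((w.take (i - 1))[(i - 1) - ((sspAt w i).toNat - 2) - 1]?) : ℕ∞)

/-- `π(w) = sspg_{reverse w}[|w|]`. -/
noncomputable def piEnc (w : List α) : ℕ∞ := sspgAt w.reverse w.length

def seg (w : List α) (i n : ℕ) : List α := (w.drop i).take n

def PalsSet (w : List α) (j : ℕ) : Set ℕ := {m | ∃ u, u <:+ w.take j ∧ IsPal u ∧ u.length = m}

lemma isPal_short {v : List α} (h : v.length ≤ 1) : IsPal v := by
  match v with
  | [] => rfl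
  | [a] => rfl
  | a :: b :: t => simp at h

lemma pal_cons_append {a b : α} {q : List α} :
    IsPal (a :: (q ++ [b])) ↔ a = b ∧ IsPal q := by
  simp only [IsPal, List.reverse_cons, List.reverse_append, List.reverse_cons,
    List.reverse_nil, List.nil_append, List.cons_append, List.cons.injEq]
  constructor
  · rintro ⟨rfl, h⟩
    exact ⟨rfl, by simpa using (List.append_left_inj [b]).mp h⟩
  · rintro ⟨rfl, h⟩
    simp [h]

lemma length_seg {w : List α} {i n : ℕ} (h : i + n ≤ w.length) : (seg w i n).length = n := by
  simp [seg]; omega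

lemma seg_getElem? {w : List α} {i n t : ℕ} (ht : t < n) (h : i + n ≤ w.length) :
    (seg w i n)[t]? = w[i + t]? := by
  rw [seg, List.getElem?_take_of_lt ht, List.getElem?_drop]

lemma seg_take {w : List α} {i n t : ℕ} (ht : t ≤ n) : (seg w i n).take t = seg w i t := by
  simp [seg, List.take_take, min_eq_left ht]

lemma seg_drop {w : List α} {i n s : ℕ} : (seg w i n).drop s = seg w (i + s) (n - s) := by
  simp [seg, List.drop_take, List.drop_drop, Nat.add_comm]

lemma mem_palsSet_iff {w : List α} {j m : ℕ} (hj : j ≤ w.length) :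
    m ∈ PalsSet w j ↔ m ≤ j ∧ IsPal (seg w (j - m) m) := by
  have hlen : (w.take j).length = j := by simp [hj]
  have hseg : ∀ m ≤ j, (w.take j).drop (j - m) = seg w (j - m) m := by
    intro m hm
    rw [List.drop_take, seg]
    congr 1
    omega
  constructor
  · rintro ⟨u, hu, hpal, rfl⟩
    have hle : u.length ≤ j := by simpa [hlen] using hu.length_le
    refine ⟨hle, ?_⟩
    have := List.suffix_iff_eq_drop.mp hu
    rw [hlen] at this
    rwa [this, hseg _ hle] at hpal
  · rintro ⟨hm, hpal⟩
    refine ⟨seg w (j - m) m, ?_, hpal, ?_⟩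
    · rw [← hseg _ hm]; exact List.drop_suffix _ _
    · apply length_seg; omega

lemma seg_cons {w : List α} {i n : ℕ} (h1 : 1 ≤ n) (h : i + n ≤ w.length) :
    seg w i n = w[i]'(by omega) :: seg w (i + 1) (n - 1) := by
  have hi : i < w.length := by omega
  rw [seg, List.drop_eq_getElem_cons hi]
  obtain ⟨n', rfl⟩ : ∃ n', n = n' + 1 := ⟨n - 1, by omega⟩
  rw [List.take_succ_cons]
  simp [seg]

lemma seg_snoc {w : List α} {i n' : ℕ} (h : i + n' < w.length) :
    seg w i (n' + 1) = seg w i n' ++ [w[i + n']'h] := by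
  rw [seg, List.take_succ, List.getElem?_drop, List.getElem?_eq_getElem h]
  simp [seg]

lemma seg_decomp {w : List α} {i n : ℕ} (h2 : 2 ≤ n) (h : i + n ≤ w.length) :
    seg w i n = w[i]'(by omega) :: (seg w (i + 1) (n - 2) ++ [w[i + n - 1]'(by omega)]) := by
  obtain ⟨m, rfl⟩ : ∃ m, n = m + 2 := ⟨n - 2, by omega⟩
  have h' : i + 1 + m < w.length := by omega
  rw [seg_cons (by omega) h]
  have e1 : m + 2 - 1 = m + 1 := by omega
  have e2 : i + (m + 2) - 1 = i + 1 + m := by omega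
  simp only [e1, e2, Nat.add_sub_cancel]
  rw [seg_snoc h']

lemma seg_pal_iff {w : List α} {i n : ℕ} (h2 : 2 ≤ n) (h : i + n ≤ w.length) :
    IsPal (seg w i n) ↔ w[i]? = w[i + n - 1]? ∧ IsPal (seg w (i + 1) (n - 2)) := by
  rw [seg_decomp h2 h, pal_cons_append,
    List.getElem?_eq_getElem (show i < w.length by omega),
    List.getElem?_eq_getElem (show i + n - 1 < w.length by omega)]
  simp

lemma pal_seg_mirror {w : List α} {i n t : ℕ} (hpal : IsPal (seg w i n))
    (h : i + n ≤ w.length) (ht : t < n) : w[i + t]? = w[i + n - 1 - t]? := by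
  have hlen : (seg w i n).length = n := length_seg h
  have h1 : w[i + t]? = (seg w i n)[t]? := (seg_getElem? ht h).symm
  have h2 : (seg w i n)[t]? = (seg w i n).reverse[t]? := by rw [hpal]
  have h3 : (seg w i n).reverse[t]? = (seg w i n)[n - 1 - t]? := by
    rw [List.getElem?_reverse (by omega), hlen]
  have h4 : (seg w i n)[n - 1 - t]? = w[i + (n - 1 - t)]? := seg_getElem? (by omega) h
  rw [h1, h2, h3, h4]
  congr 1
  omega

lemma seg_reflect {w : List α} {i n t : ℕ} (hpal : IsPal (seg w i n))
    (h : i + n ≤ w.length) (ht : t ≤ n) :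
    seg w i t = (seg w (i + n - t) t).reverse := by
  have hlen : (seg w i n).length = n := length_seg h
  have h1 : seg w i t = (seg w i n).take t := (seg_take ht).symm
  have h2 : (seg w i n).take t = (seg w i n).reverse.take t := by rw [hpal]
  rw [h1, h2, List.take_reverse, hlen]
  congr 1
  rw [seg_drop]
  congr 1 <;> omega

lemma take_eq_seg (w : List α) (l : ℕ) : w.take l = seg w 0 l := by simp [seg]

lemma pals_peel {w : List α} {j m : ℕ} (h2 : 2 ≤ m) (hmj : m ≤ j) (hj : j ≤ w.length) :
    m ∈ PalsSet w j ↔ (m - 2) ∈ PalsSet w (j - 1) ∧ w[j - m]? = w[j - 1]? := by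
  rw [mem_palsSet_iff hj, mem_palsSet_iff (show j - 1 ≤ w.length by omega)]
  have e : j - 1 - (m - 2) = j - m + 1 := by omega
  rw [e, seg_pal_iff h2 (show j - m + m ≤ w.length by omega)]
  have e2 : j - m + m - 1 = j - 1 := by omega
  have e3 : j - m + 1 = j - m + 1 := rfl
  rw [e2]
  constructor
  · rintro ⟨_, hc, hp⟩; exact ⟨⟨by omega, hp⟩, hc⟩
  · rintro ⟨⟨_, hp⟩, hc⟩; exact ⟨hmj, hc, hp⟩

lemma pals_leftchar_iff {w : List α} {mm t t' : ℕ} (htt : t < t') (ht'm : t' < mm)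
    (hm : mm ≤ w.length) (ht : t ∈ PalsSet w mm) (ht' : t' ∈ PalsSet w mm) :
    (w[mm - t - 1]? = w[mm - t' - 1]? ↔ (t + 2) ∈ PalsSet w (mm - t' + t + 1)) := by
  have hpt : IsPal (seg w (mm - t) t) := ((mem_palsSet_iff hm).mp ht).2
  have hpt' : IsPal (seg w (mm - t') t') := ((mem_palsSet_iff hm).mp ht').2
  have hb' : mm - t' + t' ≤ w.length := by omega
  -- step 1
  have hmir := pal_seg_mirror hpt' hb' (show t' - t - 1 < t' by omega)
  have e1 : mm - t' + (t' - t - 1) = mm - t - 1 := by omega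
  have e2 : mm - t' + t' - 1 - (t' - t - 1) = mm - t' + t := by omega
  rw [e1, e2] at hmir
  -- step 2 : interior palindrome
  have hrefl := seg_reflect hpt' hb' (show t ≤ t' by omega)
  have e3 : mm - t' + t' - t = mm - t := by omega
  rw [e3] at hrefl
  have hint : IsPal (seg w (mm - t') t) := by
    rw [hrefl, hpt]; exact hpt
  -- step 3
  rw [mem_palsSet_iff (show mm - t' + t + 1 ≤ w.length by omega)]
  have e4 : mm - t' + t + 1 - (t + 2) = mm - t' - 1 := by omega
  rw [e4, seg_pal_iff (by omega) (show mm - t' - 1 + (t + 2) ≤ w.length by omega)]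
  have e5 : mm - t' - 1 + (t + 2) - 1 = mm - t' + t := by omega
  have e6 : mm - t' - 1 + 1 = mm - t' := by omega
  rw [e5, e6]
  constructor
  · intro hc
    exact ⟨by omega, by rw [← hmir, ← hc], hint⟩
  · rintro ⟨_, hc, _⟩
    rw [hmir, ← hc]

lemma prefix_char_iff {w : List α} {l l' : ℕ} (hll : l < l') (hl' : l' < w.length)
    (hp : IsPal (w.take l)) (hp' : IsPal (w.take l')) :
    (w[l]? = w[l']? ↔ (l + 2) ∈ PalsSet w (l' + 1)) := by
  rw [take_eq_seg] at hp hp'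
  have hb' : 0 + l' ≤ w.length := by omega
  have hmir := pal_seg_mirror hp' hb' (show l < l' from hll)
  have e1 : (0 : ℕ) + l = l := by omega
  have e2 : 0 + l' - 1 - l = l' - l - 1 := by omega
  rw [e1, e2] at hmir
  have hrefl := seg_reflect hp' hb' (show l ≤ l' by omega)
  have e3 : 0 + l' - l = l' - l := by omega
  rw [e3] at hrefl
  have hint : IsPal (seg w (l' - l) l) := by
    have : seg w (l' - l) l = (seg w 0 l).reverse := by
      rw [hrefl, List.reverse_reverse]
    rw [this, hp]; exact hp
  rw [mem_palsSet_iff (show l' + 1 ≤ w.length by omega)]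
  have e4 : l' + 1 - (l + 2) = l' - l - 1 := by omega
  rw [e4, seg_pal_iff (by omega) (show l' - l - 1 + (l + 2) ≤ w.length by omega)]
  have e5 : l' - l - 1 + (l + 2) - 1 = l' := by omega
  have e6 : l' - l - 1 + 1 = l' - l := by omega
  rw [e5, e6]
  constructor
  · intro hc
    exact ⟨by omega, by rw [← hmir, hc], hint⟩
  · rintro ⟨_, hc, _⟩
    rw [hmir, hc]

lemma sInf_coe_nonempty {A : Set ℕ} (h : A.Nonempty) :
    sInf {ℓ : ℕ∞ | ∃ m ∈ A, (m : ℕ∞) = ℓ} = ((sInf A : ℕ) : ℕ∞) := by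
  apply le_antisymm
  · exact sInf_le ⟨sInf A, Nat.sInf_mem h, rfl⟩
  · apply le_sInf; rintro ℓ ⟨m, hm, rfl⟩
    exact_mod_cast Nat.sInf_le hm

lemma sInf_coe_empty {A : Set ℕ} (h : ¬A.Nonempty) :
    sInf {ℓ : ℕ∞ | ∃ m ∈ A, (m : ℕ∞) = ℓ} = ⊤ := by
  rw [Set.not_nonempty_iff_eq_empty] at h
  have : {ℓ : ℕ∞ | ∃ m ∈ A, (m : ℕ∞) = ℓ} = ∅ := by ext ℓ; simp [h]
  rw [this, sInf_empty]

lemma sspAt_set_eq (w : List α) (j : ℕ) :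
    sspAt w j = sInf {ℓ : ℕ∞ | ∃ m ∈ {m | 2 ≤ m ∧ m ∈ PalsSet w j}, (m : ℕ∞) = ℓ} := by
  unfold sspAt
  congr 1
  ext ℓ
  constructor
  · rintro ⟨u, h1, h2, h3, rfl⟩; exact ⟨u.length, ⟨h3, u, h1, h2, rfl⟩, rfl⟩
  · rintro ⟨m, ⟨h2, u, h1, hp, rfl⟩, rfl⟩; exact ⟨u, h1, hp, h2, rfl⟩

lemma pals_le {w : List α} {j m : ℕ} (h : m ∈ PalsSet w j) : m ≤ j := by
  obtain ⟨u, hu, _, rfl⟩ := h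
  exact le_trans hu.length_le (by simp)

lemma sspAt_le_coe {w : List α} {j m : ℕ} (h2 : 2 ≤ m) (h : m ∈ PalsSet w j) :
    sspAt w j ≤ (m : ℕ∞) := by
  rw [sspAt_set_eq]
  exact sInf_le ⟨m, ⟨h2, h⟩, rfl⟩

lemma sspAt_spec {w : List α} {j : ℕ} (h : sspAt w j ≠ ⊤) :
    ∃ m : ℕ, sspAt w j = (m : ℕ∞) ∧ 2 ≤ m ∧ m ∈ PalsSet w j ∧
      ∀ m' : ℕ, 2 ≤ m' → m' ∈ PalsSet w j → m ≤ m' := by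
  rw [sspAt_set_eq] at h ⊢
  by_cases hne : {m | 2 ≤ m ∧ m ∈ PalsSet w j}.Nonempty
  · rw [sInf_coe_nonempty hne]
    refine ⟨sInf _, rfl, (Nat.sInf_mem hne).1, (Nat.sInf_mem hne).2, ?_⟩
    intro m' h2 hm'
    exact Nat.sInf_le ⟨h2, hm'⟩
  · exact absurd (sInf_coe_empty hne) h

lemma sspAt_top {w : List α} {j : ℕ} (h : ∀ m, 2 ≤ m → m ∉ PalsSet w j) : sspAt w j = ⊤ := by
  rw [sspAt_set_eq]
  apply sInf_coe_empty
  rintro ⟨m, h2, hm⟩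
  exact h m h2 hm

lemma sspAt_small {w : List α} {j : ℕ} (h : j ≤ 1) : sspAt w j = ⊤ := by
  apply sspAt_top
  intro m h2 hm
  have := pals_le hm
  omega

lemma pals_mono {x y : List α} {e : ℕ} (hex : e ≤ x.length) (hey : e ≤ y.length)
    (h : ∀ k, k ≤ e → sspAt x k = sspAt y k) :
    ∀ j, j ≤ e → ∀ m ∈ PalsSet x j, m ∈ PalsSet y j := by
  intro j
  induction j using Nat.strong_induction_on with
  | _ j IH =>
  intro hje m hmx
  have hjx : j ≤ x.length := le_trans hje hex
  have hjy : j ≤ y.length := le_trans hje hey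
  have hmj : m ≤ j := pals_le hmx
  by_cases hm1 : m ≤ 1
  · rw [mem_palsSet_iff hjy]
    refine ⟨hmj, isPal_short ?_⟩
    rw [length_seg (by omega)]; exact hm1
  have h2 : 2 ≤ m := by omega
  have hxne : sspAt x j ≠ ⊤ := by
    intro htop
    have := sspAt_le_coe h2 hmx
    rw [htop] at this
    exact absurd (top_le_iff.mp this) (by simp)
  obtain ⟨ℓ₀, hx0, hℓ2, hℓx, hmin⟩ := sspAt_spec hxne
  have hyne : sspAt y j ≠ ⊤ := by rw [← h j hje]; exact hxne
  obtain ⟨ℓ₁, hy0, hℓ2', hℓy, _⟩ := sspAt_spec hyne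
  have hℓeq : ℓ₀ = ℓ₁ := by
    have hcast : (ℓ₀ : ℕ∞) = (ℓ₁ : ℕ∞) := by rw [← hx0, ← hy0, h j hje]
    exact_mod_cast hcast
  subst hℓeq
  have hle : ℓ₀ ≤ m := hmin m h2 hmx
  by_cases heq : m = ℓ₀
  · subst heq; exact hℓy
  have hlt : ℓ₀ < m := by omega
  obtain ⟨hm2x, hcx⟩ := (pals_peel h2 hmj hjx).mp hmx
  obtain ⟨hl2x, hclx⟩ := (pals_peel hℓ2 (pals_le hℓx) hjx).mp hℓx
  -- apply suffix-mirror on x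
  have hsm := pals_leftchar_iff (w := x) (mm := j - 1) (t := ℓ₀ - 2) (t' := m - 2)
    (by omega) (by omega) (by omega) hl2x hm2x
  have e1 : j - 1 - (ℓ₀ - 2) - 1 = j - ℓ₀ := by omega
  have e2 : j - 1 - (m - 2) - 1 = j - m := by omega
  have e3 : ℓ₀ - 2 + 2 = ℓ₀ := by omega
  have e4 : j - 1 - (m - 2) + (ℓ₀ - 2) + 1 = j - m + ℓ₀ := by omega
  rw [e1, e2, e3, e4] at hsm
  have hℓmid : ℓ₀ ∈ PalsSet x (j - m + ℓ₀) := hsm.mp (by rw [hclx, hcx])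
  -- transfer with IH
  have hℓmidy : ℓ₀ ∈ PalsSet y (j - m + ℓ₀) := IH _ (by omega) (by omega) _ hℓmid
  have hm2y : m - 2 ∈ PalsSet y (j - 1) := IH _ (by omega) (by omega) _ hm2x
  have hl2y : ℓ₀ - 2 ∈ PalsSet y (j - 1) := IH _ (by omega) (by omega) _ hl2x
  -- suffix-mirror on y
  have hsy := pals_leftchar_iff (w := y) (mm := j - 1) (t := ℓ₀ - 2) (t' := m - 2)
    (by omega) (by omega) (by omega) hl2y hm2y
  rw [e1, e2, e3, e4] at hsy
  have hcy : y[j - ℓ₀]? = y[j - m]? := hsy.mpr hℓmidy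
  obtain ⟨_, hcly⟩ := (pals_peel hℓ2 (pals_le hℓy) hjy).mp hℓy
  exact (pals_peel h2 hmj hjy).mpr ⟨hm2y, by rw [← hcy, hcly]⟩

def Gset (x : List α) (c : Option α) : Set ℕ :=
  {l | l < x.length ∧ IsPal (x.take l) ∧ x[l]? = c}

def RepPt (x : List α) (m : ℕ) : Prop :=
  m < x.length ∧ IsPal (x.take m) ∧
    ∀ m' < m, ¬(IsPal (x.take m') ∧ x[m']? = x[m]?)

noncomputable def NCnt (x : List α) (r : ℕ) : ℕ := Set.ncard {m | m ≤ r ∧ RepPt x m}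

lemma palP_iff_mem {w : List α} {l : ℕ} (hl : l ≤ w.length) :
    IsPal (w.take l) ↔ l ∈ PalsSet w l := by
  rw [mem_palsSet_iff hl, take_eq_seg]
  simp

lemma palP_transfer {x y : List α} {E : ℕ}
    (hp : ∀ j ≤ E, ∀ m ∈ PalsSet x j, m ∈ PalsSet y j)
    (hex : E ≤ x.length) (hey : E ≤ y.length) {l : ℕ} (hlE : l ≤ E) :
    IsPal (x.take l) → IsPal (y.take l) := by
  intro h
  exact (palP_iff_mem (le_trans hlE hey)).mpr
    (hp l hlE l ((palP_iff_mem (le_trans hlE hex)).mp h))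

lemma repPt_transfer {x y : List α} {E : ℕ}
    (hp : ∀ j ≤ E, ∀ m ∈ PalsSet x j, m ∈ PalsSet y j)
    (hq : ∀ j ≤ E, ∀ m ∈ PalsSet y j, m ∈ PalsSet x j)
    (hex : E ≤ x.length) (hey : E ≤ y.length) {m : ℕ} (hm : m + 1 ≤ E) :
    RepPt x m → RepPt y m := by
  rintro ⟨hmx, hpx, hmin⟩
  refine ⟨by omega, palP_transfer hp hex hey (by omega) hpx, ?_⟩
  rintro m' hm' ⟨hpy', hcy⟩
  have hpx' : IsPal (x.take m') := palP_transfer hq hey hex (by omega) hpy'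
  have hpy : IsPal (y.take m) := palP_transfer hp hex hey (by omega) hpx
  have hcy' : (m' + 2) ∈ PalsSet y (m + 1) :=
    (prefix_char_iff hm' (by omega) hpy' hpy).mp hcy
  have hcx' : (m' + 2) ∈ PalsSet x (m + 1) := hq (m + 1) hm _ hcy'
  have hcx : x[m']? = x[m]? := (prefix_char_iff hm' (by omega) hpx' hpx).mpr hcx'
  exact hmin m' hm' ⟨hpx', hcx⟩

lemma ncnt_transfer {x y : List α} {E : ℕ}
    (hp : ∀ j ≤ E, ∀ m ∈ PalsSet x j, m ∈ PalsSet y j)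
    (hq : ∀ j ≤ E, ∀ m ∈ PalsSet y j, m ∈ PalsSet x j)
    (hex : E ≤ x.length) (hey : E ≤ y.length) {r : ℕ} (hr : r + 1 ≤ E) :
    NCnt x r = NCnt y r := by
  unfold NCnt
  congr 1
  ext m
  simp only [Set.mem_setOf_eq]
  constructor
  · rintro ⟨h1, h2⟩
    exact ⟨h1, repPt_transfer hp hq hex hey (by omega) h2⟩
  · rintro ⟨h1, h2⟩
    exact ⟨h1, repPt_transfer hq hp hey hex (by omega) h2⟩

lemma repPt_sInf {x : List α} {c : Option α} (h : (Gset x c).Nonempty) :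
    RepPt x (sInf (Gset x c)) := by
  obtain ⟨h1, h2, h3⟩ := Nat.sInf_mem h
  refine ⟨h1, h2, ?_⟩
  rintro m' hm' ⟨hp', hc'⟩
  have : m' ∈ Gset x c := ⟨by omega, hp', by rw [hc', h3]⟩
  exact absurd (Nat.sInf_le this) (by omega)

lemma ncnt_finite (x : List α) (r : ℕ) : {m | m ≤ r ∧ RepPt x m}.Finite :=
  Set.Finite.subset (Set.finite_le_nat r) (fun m hm => hm.1)

lemma ncnt_strict {x : List α} {r r' : ℕ} (h : r < r') (hrep : RepPt x r') :
    NCnt x r < NCnt x r' := by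
  apply Set.ncard_lt_ncard _ (ncnt_finite x r')
  constructor
  · rintro m ⟨h1, h2⟩; exact ⟨by omega, h2⟩
  · intro hsub
    have := hsub ⟨le_refl r', hrep⟩
    simp only [Set.mem_setOf_eq] at this
    omega

lemma ncnt_mono {x : List α} {r r' : ℕ} (h : r ≤ r') : NCnt x r ≤ NCnt x r' := by
  apply Set.ncard_le_ncard _ (ncnt_finite x r')
  rintro m ⟨h1, h2⟩; exact ⟨by omega, h2⟩

lemma pal_prefix_cons_iff {a : α} {x : List α} {ℓ : ℕ} (h2 : 2 ≤ ℓ) (hl : ℓ ≤ x.length + 1) :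
    IsPal ((a :: x).take ℓ) ↔ (ℓ - 2) ∈ Gset x (some a) := by
  have hidx : ℓ - 2 < x.length := by omega
  obtain ⟨k, rfl⟩ : ∃ k, ℓ = k + 2 := ⟨ℓ - 2, by omega⟩
  simp only [Nat.add_sub_cancel]
  have h1 : (a :: x).take (k + 2) = a :: x.take (k + 1) := List.take_succ_cons
  have h2' : x.take (k + 1) = x.take k ++ [x[k]'(by omega)] := by
    rw [List.take_succ, List.getElem?_eq_getElem (by omega : k < x.length)]
    rfl
  rw [h1, h2', pal_cons_append]
  constructor
  · rintro ⟨rfl, hp⟩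
    exact ⟨by omega, hp, List.getElem?_eq_getElem _⟩
  · rintro ⟨_, hp, hc⟩
    rw [List.getElem?_eq_getElem (by omega : k < x.length)] at hc
    exact ⟨(Option.some_inj.mp hc).symm, hp⟩

lemma pal_suffix_reverse_iff {w u : List α} :
    (u <:+ w.reverse ∧ IsPal u) ↔ (u <+: w ∧ IsPal u) := by
  constructor
  · rintro ⟨hs, hp⟩
    refine ⟨?_, hp⟩
    have : u.reverse <+: w := by
      rw [← List.reverse_suffix, List.reverse_reverse]
      exact hs
    rwa [hp] at this
  · rintro ⟨hs, hp⟩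
    refine ⟨?_, hp⟩
    rw [← hp, List.reverse_suffix]
    exact hs

lemma sspAt_rev_cons_set (a : α) (x : List α) :
    {ℓ : ℕ∞ | ∃ u : List α, u <:+ ((a :: x).reverse).take (x.length + 1) ∧ IsPal u ∧
        2 ≤ u.length ∧ (u.length : ℕ∞) = ℓ} =
      {ℓ : ℕ∞ | ∃ m ∈ {m : ℕ | 2 ≤ m ∧ (m - 2) ∈ Gset x (some a)}, (m : ℕ∞) = ℓ} := by
  have htake : ((a :: x).reverse).take (x.length + 1) = (a :: x).reverse := by
    apply List.take_of_length_le; simp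
  ext ℓ
  simp only [htake, Set.mem_setOf_eq]
  constructor
  · rintro ⟨u, hs, hp, h2, rfl⟩
    obtain ⟨hpre, -⟩ := pal_suffix_reverse_iff.mp ⟨hs, hp⟩
    have hle : u.length ≤ x.length + 1 := by
      have := hpre.length_le; simpa using this
    have hu : u = (a :: x).take u.length := List.prefix_iff_eq_take.mp hpre
    refine ⟨u.length, ⟨h2, ?_⟩, rfl⟩
    rw [← pal_prefix_cons_iff h2 hle, ← hu]
    exact hp
  · rintro ⟨m, ⟨h2, hg⟩, rfl⟩
    have hmx : m - 2 < x.length := hg.1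
    have hle : m ≤ x.length + 1 := by omega
    have hp : IsPal ((a :: x).take m) := (pal_prefix_cons_iff h2 hle).mpr hg
    have hpre : (a :: x).take m <+: (a :: x) := List.take_prefix _ _
    have hlen : ((a :: x).take m).length = m := by
      rw [List.length_take]; simp; omega
    refine ⟨(a :: x).take m, (pal_suffix_reverse_iff.mpr ⟨hpre, hp⟩).1, hp, ?_, ?_⟩ <;>
      rw [hlen]
    exact h2

lemma sspAt_rev_cons_pos {a : α} {x : List α} (h : (Gset x (some a)).Nonempty) :
    sspAt ((a :: x).reverse) (x.length + 1) = ((sInf (Gset x (some a)) + 2 : ℕ) : ℕ∞) := by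
  unfold sspAt
  rw [sspAt_rev_cons_set]
  have hA : {m : ℕ | 2 ≤ m ∧ (m - 2) ∈ Gset x (some a)}.Nonempty := by
    obtain ⟨l, hl⟩ := h
    exact ⟨l + 2, by omega, by simpa using hl⟩
  rw [sInf_coe_nonempty hA]
  congr 1
  apply le_antisymm
  · exact Nat.sInf_le ⟨by omega, by simpa using Nat.sInf_mem h⟩
  · obtain ⟨h2, hg⟩ := Nat.sInf_mem hA
    have := Nat.sInf_le hg
    omega

lemma sspAt_rev_cons_top {a : α} {x : List α} (h : ¬(Gset x (some a)).Nonempty) :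
    sspAt ((a :: x).reverse) (x.length + 1) = ⊤ := by
  unfold sspAt
  rw [sspAt_rev_cons_set]
  apply sInf_coe_empty
  rintro ⟨m, h2, hg⟩
  exact h ⟨m - 2, hg⟩

lemma rev_getElem? {x : List α} {l : ℕ} (h : l < x.length) :
    (x.reverse)[x.length - l - 1]? = x[l]? := by
  rw [List.getElem?_reverse (show x.length - l - 1 < x.length by omega)]
  congr 1
  omega

lemma mem_palSufs_rev {x u : List α} :
    u ∈ palSufs x.reverse ↔ (u <+: x ∧ IsPal u ∧ u.length < x.length) := by
  unfold palSufs
  rw [List.length_reverse]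
  constructor
  · rintro ⟨h1, h2, h3⟩
    obtain ⟨h4, -⟩ := pal_suffix_reverse_iff.mp ⟨h1, h2⟩
    exact ⟨h4, h2, h3⟩
  · rintro ⟨h1, h2, h3⟩
    obtain ⟨h4, -⟩ := pal_suffix_reverse_iff.mpr ⟨h1, h2⟩
    exact ⟨h4, h2, h3⟩

lemma repLen_rev_set (x : List α) (c : Option α) :
    {ℓ : ℕ | ∃ u ∈ palSufs x.reverse,
      (x.reverse)[x.reverse.length - u.length - 1]? = c ∧ u.length = ℓ} = Gset x c := by
  ext l
  simp only [Set.mem_setOf_eq]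
  constructor
  · rintro ⟨u, hu, hc, rfl⟩
    obtain ⟨h1, h2, h3⟩ := mem_palSufs_rev.mp hu
    have hu' : u = x.take u.length := List.prefix_iff_eq_take.mp h1
    rw [List.length_reverse, rev_getElem? h3] at hc
    exact ⟨h3, by rwa [← hu'], hc⟩
  · rintro ⟨h1, h2, h3⟩
    refine ⟨x.take l, mem_palSufs_rev.mpr ⟨List.take_prefix _ _, ?_, ?_⟩, ?_, ?_⟩
    · exact h2
    · rw [List.length_take, min_eq_left (by omega)]; omega
    · rw [List.length_reverse, List.length_take, min_eq_left (by omega), rev_getElem? h1]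
      exact h3
    · rw [List.length_take, min_eq_left (by omega)]
  
lemma repLen_rev (x : List α) (c : Option α) : repLen x.reverse c = sInf (Gset x c) := by
  unfold repLen
  rw [repLen_rev_set]

lemma palSufGroups_rev (x : List α) :
    palSufGroups x.reverse = {c | (Gset x c).Nonempty} := by
  ext c
  unfold palSufGroups
  simp only [Set.mem_setOf_eq]
  constructor
  · rintro ⟨u, hu, hc⟩
    have : u.length ∈ Gset x c := by
      rw [← repLen_rev_set x c]
      exact ⟨u, hu, hc, rfl⟩
    exact ⟨u.length, this⟩
  · rintro ⟨l, hl⟩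
    rw [← repLen_rev_set x c] at hl
    obtain ⟨u, hu, hc, -⟩ := hl
    exact ⟨u, hu, hc⟩

lemma groupIdOf_rev (x : List α) (c : Option α) :
    groupIdOf x.reverse c =
      Set.ncard {c' | (Gset x c').Nonempty ∧ sInf (Gset x c') ≤ sInf (Gset x c)} := by
  unfold groupIdOf
  congr 1
  ext c'
  rw [Set.mem_setOf_eq, Set.mem_setOf_eq, repLen_rev, repLen_rev, palSufGroups_rev]
  rfl

lemma ncard_groups (x : List α) (r : ℕ) :
    Set.ncard {c' : Option α | (Gset x c').Nonempty ∧ sInf (Gset x c') ≤ r} = NCnt x r := by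
  have himg : (fun c' => sInf (Gset x c')) ''
      {c' : Option α | (Gset x c').Nonempty ∧ sInf (Gset x c') ≤ r} =
      {m | m ≤ r ∧ RepPt x m} := by
    ext m
    constructor
    · rintro ⟨c', ⟨hne, hle⟩, rfl⟩
      exact ⟨hle, repPt_sInf hne⟩
    · rintro ⟨hle, hrep⟩
      obtain ⟨hmx, hpal, hmin⟩ := hrep
      have hmem : m ∈ Gset x x[m]? := ⟨hmx, hpal, rfl⟩
      refine ⟨x[m]?, ⟨⟨m, hmem⟩, ?_⟩, ?_⟩
      · have : sInf (Gset x x[m]?) ≤ m := Nat.sInf_le hmem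
        omega
      · show sInf (Gset x x[m]?) = m
        apply le_antisymm (Nat.sInf_le hmem)
        by_contra hlt
        push_neg at hlt
        have hne : (Gset x x[m]?).Nonempty := ⟨m, hmx, hpal, rfl⟩
        obtain ⟨h1, h2, h3⟩ := Nat.sInf_mem hne
        exact hmin _ hlt ⟨h2, h3⟩
  have hinj : Set.InjOn (fun c' => sInf (Gset x c'))
      {c' : Option α | (Gset x c').Nonempty ∧ sInf (Gset x c') ≤ r} := by
    rintro c₁ ⟨h₁, -⟩ c₂ ⟨h₂, -⟩ he
    simp only at he
    have m₁ := Nat.sInf_mem h₁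
    have m₂ := Nat.sInf_mem h₂
    rw [he] at m₁
    rw [← m₁.2.2, m₂.2.2]
  rw [NCnt, ← himg, Set.ncard_image_of_injOn hinj]

lemma piEnc_cons_pos {a : α} {x : List α} (h : (Gset x (some a)).Nonempty) :
    piEnc (a :: x) = (NCnt x (sInf (Gset x (some a))) : ℕ∞) := by
  set r := sInf (Gset x (some a)) with hr
  have hrg : r ∈ Gset x (some a) := Nat.sInf_mem h
  have hrx : r < x.length := hrg.1
  unfold piEnc sspgAt
  have hlen : (a :: x).length = x.length + 1 := by simp
  rw [hlen, sspAt_rev_cons_pos h]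
  rw [if_neg (by exact_mod_cast ENat.coe_ne_top (r + 2))]
  rw [ENat.toNat_coe]
  have htake : ((a :: x).reverse).take (x.length + 1 - 1) = x.reverse := by
    rw [List.reverse_cons, Nat.add_sub_cancel,
      List.take_append_of_le_length (by simp), List.take_of_length_le (by simp)]
  rw [htake]
  have hidx : x.length + 1 - 1 - (r + 2 - 2) - 1 = x.length - r - 1 := by omega
  rw [hidx, rev_getElem? hrx, hrg.2.2, groupIdOf_rev, ← hr, ncard_groups]

lemma piEnc_cons_top {a : α} {x : List α} (h : ¬(Gset x (some a)).Nonempty) :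
    piEnc (a :: x) = ⊤ := by
  unfold piEnc sspgAt
  have hlen : (a :: x).length = x.length + 1 := by simp
  rw [hlen, sspAt_rev_cons_top h, if_pos rfl]

lemma grp {x y : List α} {a b : α} {E : ℕ}
    (hex : E ≤ x.length) (hey : E ≤ y.length)
    (hp : ∀ j ≤ E, ∀ m ∈ PalsSet x j, m ∈ PalsSet y j)
    (hq : ∀ j ≤ E, ∀ m ∈ PalsSet y j, m ∈ PalsSet x j)
    (hπ : piEnc (a :: x) = piEnc (b :: y)) :
    ∀ l, l + 1 ≤ E → l ∈ Gset x (some a) → l ∈ Gset y (some b) := by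
  intro l hlE hl
  have ha : (Gset x (some a)).Nonempty := ⟨l, hl⟩
  have hral : sInf (Gset x (some a)) ≤ l := Nat.sInf_le hl
  set ra := sInf (Gset x (some a)) with hra
  have hπx : piEnc (a :: x) = (NCnt x ra : ℕ∞) := piEnc_cons_pos ha
  have hb : (Gset y (some b)).Nonempty := by
    by_contra hcon
    rw [piEnc_cons_top hcon, hπx] at hπ
    exact (ENat.coe_ne_top _) hπ
  set rb := sInf (Gset y (some b)) with hrb
  have hπy : piEnc (b :: y) = (NCnt y rb : ℕ∞) := piEnc_cons_pos hb
  have hN : NCnt x ra = NCnt y rb := by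
    rw [hπx, hπy] at hπ; exact_mod_cast hπ
  have hrepxa : RepPt x ra := repPt_sInf ha
  have hrepyb : RepPt y rb := repPt_sInf hb
  have hrr : rb = ra := by
    rcases lt_trichotomy rb ra with hlt | heq | hgt
    · have h1 := ncnt_strict hlt hrepxa
      have h2 := ncnt_transfer hp hq hex hey (show rb + 1 ≤ E by omega)
      omega
    · exact heq
    · have h1 := ncnt_strict hgt hrepyb
      have h2 := ncnt_transfer hp hq hex hey (show ra + 1 ≤ E by omega)
      omega
  have hyr : y[ra]? = some b := by
    rw [← hrr]
    exact (Nat.sInf_mem hb).2.2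
  have hply : IsPal (y.take l) := palP_transfer hp hex hey (by omega) hl.2.1
  have hly : l < y.length := by omega
  by_cases hcase : ra = l
  · exact ⟨hly, hply, by rw [← hcase]; exact hyr⟩
  · have hlt : ra < l := by omega
    have hplxr : IsPal (x.take ra) := (Nat.sInf_mem ha).2.1
    have hcx : x[ra]? = x[l]? := by rw [hl.2.2, (Nat.sInf_mem ha).2.2]
    have hmx := (prefix_char_iff hlt hl.1 hplxr hl.2.1).mp hcx
    have hmy := hp (l + 1) hlE _ hmx
    have hplyr : IsPal (y.take ra) := palP_transfer hp hex hey (by omega) hplxr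
    have hcy : y[ra]? = y[l]? := (prefix_char_iff hlt hly hplyr hply).mpr hmy
    exact ⟨hly, hply, by rw [← hcy]; exact hyr⟩

lemma pal_cons_take_iff {c : α} {w : List α} {d : ℕ} (h1 : 1 ≤ d) (hd : d ≤ w.length) :
    IsPal (c :: w.take d) ↔ (d - 1) ∈ Gset w (some c) := by
  have h := pal_prefix_cons_iff (a := c) (x := w) (ℓ := d + 1) (by omega) (by omega)
  rw [List.take_succ_cons] at h
  have e : d + 1 - 2 = d - 1 := by omega
  rwa [e] at h

lemma sspAt_cons_split {c : α} {w : List α} {d : ℕ} (h1 : 1 ≤ d) (hd : d ≤ w.length) :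
    sspAt (c :: w) (d + 1) =
      sspAt w d ⊓ sInf {ℓ : ℕ∞ | IsPal (c :: w.take d) ∧ ℓ = ((d + 1 : ℕ) : ℕ∞)} := by
  have htake : (c :: w).take (d + 1) = c :: w.take d := List.take_succ_cons
  have hlenw : (c :: w.take d).length = d + 1 := by simp [hd]
  unfold sspAt
  rw [← sInf_union, htake]
  congr 1
  ext ℓ
  constructor
  · rintro ⟨u, hs, hp, h2, rfl⟩
    rcases List.suffix_cons_iff.mp hs with heq | hs'
    · right
      exact ⟨by rwa [← heq], by rw [heq, hlenw]⟩
    · left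
      exact ⟨u, hs', hp, h2, rfl⟩
  · rintro (⟨u, hs, hp, h2, rfl⟩ | ⟨hp, rfl⟩)
    · exact ⟨u, List.suffix_cons_iff.mpr (Or.inr hs), hp, h2, rfl⟩
    · refine ⟨c :: w.take d, List.suffix_refl _, hp, ?_, ?_⟩ <;> rw [hlenw]
      exact_mod_cast by omega

lemma sspAt_cons_of_mem {c : α} {w : List α} {d : ℕ} (h1 : 1 ≤ d) (hd : d ≤ w.length)
    (hmem : (d - 1) ∈ Gset w (some c)) :
    sspAt (c :: w) (d + 1) = sspAt w d ⊓ ((d + 1 : ℕ) : ℕ∞) := by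
  rw [sspAt_cons_split h1 hd]
  congr 1
  have hset : {ℓ : ℕ∞ | IsPal (c :: w.take d) ∧ ℓ = ((d + 1 : ℕ) : ℕ∞)} =
      {((d + 1 : ℕ) : ℕ∞)} := by
    ext ℓ
    simp [Set.mem_setOf_eq, (pal_cons_take_iff h1 hd).mpr hmem]
  rw [hset, sInf_singleton]

lemma sspAt_cons_of_not_mem {c : α} {w : List α} {d : ℕ} (h1 : 1 ≤ d) (hd : d ≤ w.length)
    (hmem : (d - 1) ∉ Gset w (some c)) :
    sspAt (c :: w) (d + 1) = sspAt w d := by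
  rw [sspAt_cons_split h1 hd]
  have hset : {ℓ : ℕ∞ | IsPal (c :: w.take d) ∧ ℓ = ((d + 1 : ℕ) : ℕ∞)} = ∅ := by
    ext ℓ
    simp only [Set.mem_setOf_eq, Set.mem_empty_iff_false, iff_false, not_and]
    intro hp
    exact absurd ((pal_cons_take_iff h1 hd).mp hp) hmem
  rw [hset, sInf_empty, inf_top_eq]

lemma sspAt_le_idx {w : List α} {j : ℕ} (h : sspAt w j ≠ ⊤) : sspAt w j ≤ (j : ℕ∞) := by
  obtain ⟨m, heq, -, hmem, -⟩ := sspAt_spec h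
  rw [heq]
  exact_mod_cast pals_le hmem

section LexUtil

variable {β : Type*} {r : β → β → Prop}

lemma lex_build : ∀ (k : ℕ) {u v : List β}, u.take k = v.take k →
    ((u.length = k ∧ k < v.length) ∨
      (∃ a b, u[k]? = some a ∧ v[k]? = some b ∧ r a b)) →
    List.Lex r u v := by
  intro k
  induction k with
  | zero =>
    intro u v _ h
    rcases h with ⟨h0, hv⟩ | ⟨a, b, ha, hb, hr⟩
    · have hu : u = [] := List.length_eq_zero_iff.mp h0
      subst hu
      cases v with
      | nil => simp at hv
      | cons b v' => exact List.Lex.nil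
    · cases u with
      | nil => simp at ha
      | cons a' u' =>
        cases v with
        | nil => simp at hb
        | cons b' v' =>
          simp only [List.getElem?_cons_zero, Option.some.injEq] at ha hb
          subst ha; subst hb
          exact List.Lex.rel hr
  | succ k IH =>
    intro u v ht h
    cases u with
    | nil =>
      rcases h with ⟨h0, hv⟩ | ⟨a, b, ha, hb, hr⟩
      · simp at h0
      · simp at ha
    | cons a u' =>
      cases v with
      | nil =>
        rcases h with ⟨h0, hv⟩ | ⟨a', b, ha, hb, hr⟩
        · simp at hv
        · simp at hb
      | cons b v' =>
        rw [List.take_succ_cons, List.take_succ_cons] at ht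
        have hab : a = b := (List.cons.injEq _ _ _ _).mp ht |>.1
        have htt : u'.take k = v'.take k := (List.cons.injEq _ _ _ _).mp ht |>.2
        subst hab
        apply List.Lex.cons
        apply IH htt
        rcases h with ⟨h0, hv⟩ | ⟨a', b', ha, hb, hr⟩
        · left
          constructor
          · simpa using h0
          · simpa using hv
        · right
          exact ⟨a', b', by simpa using ha, by simpa using hb, hr⟩

lemma lex_dest {u v : List β} (h : List.Lex r u v) :
    ∃ k, u.take k = v.take k ∧
      ((u.length = k ∧ k < v.length) ∨
        (∃ a b, u[k]? = some a ∧ v[k]? = some b ∧ r a b)) := by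
  induction h with
  | @nil b v' => exact ⟨0, rfl, Or.inl ⟨rfl, by simp⟩⟩
  | @cons a l₁ l₂ h IH =>
    obtain ⟨k, h1, h2⟩ := IH
    refine ⟨k + 1, by simp [List.take_succ_cons, h1], ?_⟩
    rcases h2 with ⟨h0, hv⟩ | ⟨a', b', ha, hb, hr⟩
    · exact Or.inl ⟨by simp [h0], by simp; omega⟩
    · exact Or.inr ⟨a', b', by simpa using ha, by simpa using hb, hr⟩
  | @rel a l₁ b l₂ hr => exact ⟨0, rfl, Or.inr ⟨a, b, by simp, by simp, hr⟩⟩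

lemma take_eq_get {u v : List β} {k i : ℕ} (h : u.take k = v.take k) (hi : i < k) :
    u[i]? = v[i]? := by
  rw [← List.getElem?_take_of_lt (l := u) hi, h, List.getElem?_take_of_lt hi]

lemma build_take_eq {u v : List β} {k : ℕ} (h : ∀ i, i < k → u[i]? = v[i]?) :
    u.take k = v.take k := by
  apply List.ext_getElem?
  intro i
  by_cases hik : i < k
  · rw [List.getElem?_take_of_lt hik, List.getElem?_take_of_lt hik, h i hik]
  · rw [List.getElem?_eq_none, List.getElem?_eq_none] <;>
      · have hu := List.length_take (i := k) (l := u)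
        have hv := List.length_take (i := k) (l := v)
        simp only [List.length_take]
        omega

end LexUtil

lemma ssp_length (w : List α) : (ssp w).length = w.length := by simp [ssp]

lemma ssp_getElem? {w : List α} {k : ℕ} (h : k < w.length) :
    (ssp w)[k]? = some (sspAt w (k + 1)) := by
  rw [ssp, List.getElem?_map, List.getElem?_range h]
  rfl

lemma core {x y : List α} {a b : α}
    (hπ : piEnc (a :: x) = piEnc (b :: y))
    (hlex : List.Lex (· < ·) (ssp x) (ssp y)) :
    List.Lex (· < ·) (ssp (a :: x)) (ssp (b :: y)) := by
  obtain ⟨k, htake, hcase⟩ := lex_dest hlex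
  have hkx : k ≤ x.length := by
    rcases hcase with ⟨h0, -⟩ | ⟨A, B, hA, -, -⟩
    · rw [← h0, ssp_length]
    · by_contra hc
      rw [List.getElem?_eq_none (by rw [ssp_length]; omega)] at hA
      cases hA
  have hky : k ≤ y.length := by
    rcases hcase with ⟨-, h0⟩ | ⟨A, B, -, hB, -⟩
    · rw [ssp_length] at h0; omega
    · by_contra hc
      rw [List.getElem?_eq_none (by rw [ssp_length]; omega)] at hB
      cases hB
  -- agreement of sspAt values up to k
  have hagree : ∀ t, t ≤ k → sspAt x t = sspAt y t := by
    intro t ht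
    rcases Nat.eq_zero_or_pos t with rfl | hpos
    · rw [sspAt_small (by omega), sspAt_small (by omega)]
    · have hg := take_eq_get htake (show t - 1 < k by omega)
      rw [ssp_getElem? (by omega), ssp_getElem? (by omega)] at hg
      have e : t - 1 + 1 = t := by omega
      rw [e] at hg
      exact Option.some_inj.mp hg
  have hp : ∀ j ≤ k, ∀ m ∈ PalsSet x j, m ∈ PalsSet y j := pals_mono hkx hky hagree
  have hq : ∀ j ≤ k, ∀ m ∈ PalsSet y j, m ∈ PalsSet x j :=
    pals_mono hky hkx (fun t ht => (hagree t ht).symm)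
  have hgrp1 := grp hkx hky hp hq hπ
  have hgrp2 := grp hky hkx hq hp hπ.symm
  -- pointwise equality of the extended ssp sequences below index k+1
  have hnew : ∀ i, i < k + 1 → (ssp (a :: x))[i]? = (ssp (b :: y))[i]? := by
    intro i hi
    rw [ssp_getElem? (by simp; omega), ssp_getElem? (by simp; omega)]
    congr 1
    rcases Nat.eq_zero_or_pos i with rfl | hpos
    · rw [sspAt_small (by omega), sspAt_small (by omega)]
    · by_cases hmem : (i - 1) ∈ Gset x (some a)
      · have hmem' : (i - 1) ∈ Gset y (some b) := hgrp1 _ (by omega) hmem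
        rw [sspAt_cons_of_mem hpos (by omega) hmem,
          sspAt_cons_of_mem hpos (by omega) hmem', hagree i (by omega)]
      · have hmem' : (i - 1) ∉ Gset y (some b) := fun hc => hmem (hgrp2 _ (by omega) hc)
        rw [sspAt_cons_of_not_mem hpos (by omega) hmem,
          sspAt_cons_of_not_mem hpos (by omega) hmem', hagree i (by omega)]
  rcases hcase with ⟨h0, hv⟩ | ⟨A, B, hA, hB, hAB⟩
  · -- prefix case : k = |x| < |y|
    have hkex : k = x.length := by rw [← h0, ssp_length]
    have hkyl : k < y.length := by rw [ssp_length] at hv; exact hv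
    apply lex_build (k + 1) (build_take_eq hnew)
    left
    constructor
    · rw [ssp_length]; simp; omega
    · rw [ssp_length]; simp; omega
  · -- difference case at position k
    have hkxl : k < x.length := by
      by_contra hc
      rw [List.getElem?_eq_none (by rw [ssp_length]; omega)] at hA
      cases hA
    have hkyl : k < y.length := by
      by_contra hc
      rw [List.getElem?_eq_none (by rw [ssp_length]; omega)] at hB
      cases hB
    rw [ssp_getElem? hkxl] at hA
    rw [ssp_getElem? hkyl] at hB
    have hA' : sspAt x (k + 1) = A := Option.some_inj.mp hA
    have hB' : sspAt y (k + 1) = B := Option.some_inj.mp hB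
    have hAne : A ≠ ⊤ := ne_top_of_lt hAB
    have hAle : A ≤ ((k + 1 : ℕ) : ℕ∞) := by
      rw [← hA']
      exact_mod_cast sspAt_le_idx (by rw [hA']; exact hAne)
    apply lex_build (k + 1) (build_take_eq hnew)
    right
    refine ⟨sspAt (a :: x) (k + 2), sspAt (b :: y) (k + 2),
      ssp_getElem? (by simp; omega), ssp_getElem? (by simp; omega), ?_⟩
    -- LHS ≤ A
    have hL : sspAt (a :: x) (k + 2) ≤ A := by
      by_cases hmem : (k + 1 - 1) ∈ Gset x (some a)
      · rw [show k + 2 = (k + 1) + 1 from rfl, sspAt_cons_of_mem (by omega) (by omega) hmem, hA']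
        exact inf_le_left
      · rw [show k + 2 = (k + 1) + 1 from rfl, sspAt_cons_of_not_mem (by omega) (by omega) hmem, hA']
    -- RHS > A
    have hR : A < sspAt (b :: y) (k + 2) := by
      by_cases hmem : (k + 1 - 1) ∈ Gset y (some b)
      · rw [show k + 2 = (k + 1) + 1 from rfl, sspAt_cons_of_mem (by omega) (by omega) hmem, hB']
        refine lt_inf_iff.mpr ⟨hAB, lt_of_le_of_lt hAle ?_⟩
        exact_mod_cast Nat.lt_succ_self (k + 1)
      · rw [show k + 2 = (k + 1) + 1 from rfl, sspAt_cons_of_not_mem (by omega) (by omega) hmem, hB']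
        exact hAB
    exact lt_of_le_of_lt hL hR


theorem stmt9 {α : Type*} (T : List α) (n : ℕ) (hT : T.length = n)
    (SA LF : ℕ → ℕ) (L : ℕ → Option ℕ∞)
    (hSAbij : Set.BijOn SA (Set.Icc 1 (n + 1)) (Set.Icc 1 (n + 1)))
    (hsorted : ∀ i, 1 ≤ i → i < n + 1 →
      List.Lex (· < ·) (ssp (T.drop (SA i - 1))) (ssp (T.drop (SA (i + 1) - 1))))
    (hL : ∀ i ∈ Set.Icc 1 (n + 1),
      L i = if SA i = 1 then none else some (piEnc (T.drop (SA i - 2))))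
    (hLF1 : ∀ i ∈ Set.Icc 1 (n + 1), SA i = 1 → LF i = 1)
    (hLF2 : ∀ i ∈ Set.Icc 1 (n + 1), SA i ≠ 1 →
      LF i ∈ Set.Icc 1 (n + 1) ∧ SA (LF i) = SA i - 1) :
    ∀ i j, 1 ≤ i → i < j → j ≤ n + 1 → L i = L j → L i ≠ none → LF i < LF j := by
  have hmono : ∀ s t, 1 ≤ s → s < t → t ≤ n + 1 →
      List.Lex (· < ·) (ssp (T.drop (SA s - 1))) (ssp (T.drop (SA t - 1))) := by
    intro s t hs
    induction t with
    | zero => omega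
    | succ t IH =>
      intro hst ht
      rcases Nat.lt_or_ge s t with h | h
      · exact lt_trans (α := List ℕ∞) (IH h (by omega)) (hsorted t (by omega) (by omega))
      · have : s = t := by omega
        subst this
        exact hsorted s (by omega) (by omega)
  intro i j hi1 hij hj hLij hLine
  have hiI : i ∈ Set.Icc 1 (n + 1) := Set.mem_Icc.mpr ⟨hi1, by omega⟩
  have hjI : j ∈ Set.Icc 1 (n + 1) := Set.mem_Icc.mpr ⟨by omega, hj⟩
  have hLi := hL i hiI
  have hLj := hL j hjI
  have hSAi1 : SA i ≠ 1 := by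
    intro hc
    rw [hLi, if_pos hc] at hLine
    exact hLine rfl
  have hSAj1 : SA j ≠ 1 := by
    intro hc
    rw [hLij, hLj, if_pos hc] at hLine
    exact hLine rfl
  rw [if_neg hSAi1] at hLi
  rw [if_neg hSAj1] at hLj
  have hπ0 : piEnc (T.drop (SA i - 2)) = piEnc (T.drop (SA j - 2)) := by
    have := hLij
    rw [hLi, hLj] at this
    exact Option.some_inj.mp this
  have hSAiI := hSAbij.mapsTo hiI
  have hSAjI := hSAbij.mapsTo hjI
  rw [Set.mem_Icc] at hSAiI hSAjI
  have hp2 : 2 ≤ SA i := by omega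
  have hq2 : 2 ≤ SA j := by omega
  set p := SA i - 1 with hpdef
  set q := SA j - 1 with hqdef
  have hpn : 1 ≤ p ∧ p ≤ n := by omega
  have hqn : 1 ≤ q ∧ q ≤ n := by omega
  have hsplit : ∀ s (h1 : 1 ≤ s) (h2 : s ≤ n),
      T.drop (s - 1) = T[s - 1]'(by omega) :: T.drop s := by
    intro s h1 h2
    rw [List.drop_eq_getElem_cons (show s - 1 < T.length by omega)]
    congr 2
    omega
  have hπ : piEnc (T[p - 1]'(by omega) :: T.drop p) =
      piEnc (T[q - 1]'(by omega) :: T.drop q) := by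
    rw [← hsplit p hpn.1 hpn.2, ← hsplit q hqn.1 hqn.2]
    have e1 : SA i - 2 = p - 1 := by omega
    have e2 : SA j - 2 = q - 1 := by omega
    rw [e1, e2] at hπ0
    exact hπ0
  have hlex0 : List.Lex (· < ·) (ssp (T.drop p)) (ssp (T.drop q)) := by
    have := hmono i j hi1 hij hj
    rwa [← hpdef, ← hqdef] at this
  have hkey : List.Lex (· < ·) (ssp (T.drop (p - 1))) (ssp (T.drop (q - 1))) := by
    rw [hsplit p hpn.1 hpn.2, hsplit q hqn.1 hqn.2]
    exact core hπ hlex0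
  obtain ⟨hLFiI, hLFieq⟩ := hLF2 i hiI hSAi1
  obtain ⟨hLFjI, hLFjeq⟩ := hLF2 j hjI hSAj1
  rw [Set.mem_Icc] at hLFiI hLFjI
  by_contra hcon
  push_neg at hcon
  rcases Nat.lt_or_ge (LF j) (LF i) with hlt | hge
  · have hlex2 := hmono (LF j) (LF i) (by omega) hlt (by omega)
    rw [hLFieq, hLFjeq, ← hpdef, ← hqdef] at hlex2
    exact _root_.asymm hkey hlex2
  · have heq : LF j = LF i := by omega
    have hSAeq : SA i = SA j := by
      have := hLFieq
      rw [← heq, hLFjeq] at this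
      omega
    have := hSAbij.injOn hiI hjI hSAeq
    omega
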